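/- Let α > -1/2. There is a constant C > 0 such that for all s, y, z > 0 with y z e^{-s}/(1 - e^{-2s}) ≤ 1, |∂/∂s W_s^α(y,z)| ≤ C (yz)^{α + 1/2} e^{-(y² + z²)/(8s)} e^{-(α+1)s} (1 - e^{-2s})^{-(α+2)}, where W_s^α is the Laguerre heat kernel. -/

import Mathlib

open MeasureTheory Real

/-- The modified Bessel function of the first kind `I_a`. -/
noncomputable def besselI (a x : ℝ) : ℝ :=
  ∑' k : ℕ, (x / 2) ^ (2 * (k : ℝ) + a) / ((Nat.factorial k : ℝ) * Real.Gamma ((k : ℝ) + a + 1))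

/-- The Laguerre heat kernel `W_s^α(y,z)`. -/
noncomputable def laguerreHeatKernel (a s y z : ℝ) : ℝ :=
  (2 * Real.exp (-s) / (1 - Real.exp (-2 * s))) ^ ((1 : ℝ) / 2) *
    (2 * y * z * Real.exp (-s) / (1 - Real.exp (-2 * s))) ^ ((1 : ℝ) / 2) *
    besselI a (2 * y * z * Real.exp (-s) / (1 - Real.exp (-2 * s))) *
    Real.exp (-(1 / 2) * (y ^ 2 + z ^ 2) * (1 + Real.exp (-2 * s)) / (1 - Real.exp (-2 * s)))

/-- The Hermite (Mehler) heat kernel `W_s(x,y)`. -/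
noncomputable def hermiteHeatKernel (s x y : ℝ) : ℝ :=
  Real.pi ^ (-(1 : ℝ) / 2) * (Real.exp (-s) / (1 - Real.exp (-2 * s))) ^ ((1 : ℝ) / 2) *
    Real.exp (-((x - Real.exp (-s) * y) ^ 2 + (y - Real.exp (-s) * x) ^ 2) /
      (2 * (1 - Real.exp (-2 * s))))

noncomputable def st13h (s : ℝ) : ℝ := Real.exp (-s) / (1 - Real.exp (-2 * s))
noncomputable def st13c (s : ℝ) : ℝ := (1 + Real.exp (-2 * s)) / (1 - Real.exp (-2 * s))
noncomputable def st13E (R s : ℝ) : ℝ := Real.exp (-(1/2) * R * st13c s)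
noncomputable def st13K (a b : ℝ) (k : ℕ) : ℝ :=
  2 * b ^ (2*(k:ℝ)+a+1/2) / ((k.factorial : ℝ) * Real.Gamma ((k:ℝ)+a+1))
noncomputable def st13g (a b R : ℝ) (k : ℕ) (s : ℝ) : ℝ :=
  st13K a b k * st13h s ^ (2*(k:ℝ)+a+1) * st13E R s
noncomputable def st13g' (a b R : ℝ) (k : ℕ) (s : ℝ) : ℝ :=
  st13K a b k * st13h s ^ (2*(k:ℝ)+a+1) * st13E R s *
    (2*R*st13h s^2 - (2*(k:ℝ)+a+1) * st13c s)

lemma st13_u_pos {s : ℝ} (hs : 0 < s) : 0 < 1 - Real.exp (-2 * s) := by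
  have : Real.exp (-2 * s) < 1 := Real.exp_lt_one_iff.mpr (by nlinarith)
  linarith

lemma st13_u_lt_one {s : ℝ} (hs : 0 < s) : 1 - Real.exp (-2 * s) < 1 := by
  have := Real.exp_pos (-2 * s); linarith

lemma st13_u_le {s : ℝ} (hs : 0 < s) : 1 - Real.exp (-2 * s) ≤ 2 * s := by
  have := Real.add_one_le_exp (-2 * s); linarith

lemma st13h_pos {s : ℝ} (hs : 0 < s) : 0 < st13h s :=
  div_pos (Real.exp_pos _) (st13_u_pos hs)

lemma st13c_pos {s : ℝ} (hs : 0 < s) : 0 < st13c s :=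
  div_pos (by positivity) (st13_u_pos hs)

lemma st13c_ge {s : ℝ} (hs : 0 < s) : 1 / (2 * s) ≤ st13c s := by
  have hu := st13_u_pos hs
  have h2 := st13_u_le hs
  have h3 : (0:ℝ) < Real.exp (-2*s) := Real.exp_pos _
  rw [st13c, div_le_div_iff₀ (by linarith) hu]
  nlinarith

lemma st13c_le {s : ℝ} (hs : 0 < s) : st13c s ≤ 2 / (1 - Real.exp (-2 * s)) := by
  have hu := st13_u_pos hs
  have : Real.exp (-2*s) ≤ 1 := le_of_lt (by linarith [st13_u_pos hs])
  rw [st13c]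
  gcongr
  · linarith [Real.exp_pos (-2*s)]

lemma st13h_le_half_c {s : ℝ} (hs : 0 < s) : st13h s ≤ st13c s / 2 := by
  have hu := st13_u_pos hs
  have h2 : Real.exp (-2*s) = Real.exp (-s) ^ 2 := by
    rw [← Real.exp_nat_mul]; ring_nf
  have h1 : 0 ≤ (1 - Real.exp (-s))^2 := sq_nonneg _
  rw [st13h, st13c, div_div, div_le_div_iff₀ hu (by positivity)]
  nlinarith

lemma st13E_pos (R s : ℝ) : 0 < st13E R s := Real.exp_pos _

lemma st13E_le_one {R s : ℝ} (hR : 0 ≤ R) (hs : 0 < s) : st13E R s ≤ 1 := by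
  rw [st13E]
  apply Real.exp_le_one_iff.mpr
  have := st13c_pos hs
  nlinarith

lemma st13h_mono {s₁ s₂ : ℝ} (h1 : 0 < s₁) (h12 : s₁ ≤ s₂) : st13h s₂ ≤ st13h s₁ := by
  have h2 : 0 < s₂ := lt_of_lt_of_le h1 h12
  rw [st13h, st13h, div_le_div_iff₀ (st13_u_pos h2) (st13_u_pos h1)]
  have e1 : Real.exp (-s₂) ≤ Real.exp (-s₁) := Real.exp_le_exp.mpr (by linarith)
  have q1 : Real.exp (-2*s₁) = Real.exp (-s₁) ^ 2 := by rw [← Real.exp_nat_mul]; ring_nf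
  have q2 : Real.exp (-2*s₂) = Real.exp (-s₂) ^ 2 := by rw [← Real.exp_nat_mul]; ring_nf
  have p1 := Real.exp_pos (-s₂)
  have p2 := Real.exp_pos (-s₁)
  have e3 : Real.exp (-s₁) < 1 := Real.exp_lt_one_iff.mpr (by linarith)
  rw [q1, q2]
  nlinarith [mul_nonneg (sub_nonneg.mpr e1) (mul_pos p2 p1).le]

lemma st13c_mono {s₁ s₂ : ℝ} (h1 : 0 < s₁) (h12 : s₁ ≤ s₂) : st13c s₂ ≤ st13c s₁ := by
  have h2 : 0 < s₂ := lt_of_lt_of_le h1 h12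
  rw [st13c, st13c, div_le_div_iff₀ (st13_u_pos h2) (st13_u_pos h1)]
  have e2 : Real.exp (-2*s₂) ≤ Real.exp (-2*s₁) := Real.exp_le_exp.mpr (by linarith)
  have p1 := Real.exp_pos (-2*s₂)
  nlinarith [st13_u_pos h1, st13_u_pos h2]

lemma st13_hasDerivAt_u (s : ℝ) :
    HasDerivAt (fun s => 1 - Real.exp (-2 * s)) (2 * Real.exp (-2 * s)) s := by
  have h : HasDerivAt (fun s : ℝ => -2 * s) (-2) s := by
    simpa using (hasDerivAt_id s).const_mul (-2)
  have := (h.exp)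
  have h2 := this.const_sub 1
  exact h2.congr_deriv (Eq.symm (by ring))

lemma st13_hasDerivAt_h {s : ℝ} (hs : 0 < s) :
    HasDerivAt st13h (-(st13h s * st13c s)) s := by
  have hu := st13_u_pos hs
  have h1 : HasDerivAt (fun s : ℝ => Real.exp (-s)) (-Real.exp (-s)) s := by
    have h : HasDerivAt (fun s : ℝ => -s) (-1) s := (hasDerivAt_id s).neg
    simpa using h.exp
  have := h1.div (st13_hasDerivAt_u s) (ne_of_gt hu)
  refine this.congr_deriv (Eq.symm ?_)
  rw [st13h, st13c]
  field_simp
  ring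

lemma st13_hasDerivAt_c {s : ℝ} (hs : 0 < s) :
    HasDerivAt st13c (-(4 * st13h s ^ 2)) s := by
  have hu := st13_u_pos hs
  have h1 : HasDerivAt (fun s : ℝ => 1 + Real.exp (-2 * s)) (-2 * Real.exp (-2 * s)) s := by
    have h : HasDerivAt (fun s : ℝ => -2 * s) (-2) s := by
      simpa using (hasDerivAt_id s).const_mul (-2)
    have := h.exp.const_add 1
    exact this.congr_deriv (Eq.symm (by ring))
  have := h1.div (st13_hasDerivAt_u s) (ne_of_gt hu)
  refine this.congr_deriv (Eq.symm ?_)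
  have h2 : Real.exp (-2*s) = Real.exp (-s) ^ 2 := by
    rw [← Real.exp_nat_mul]; ring_nf
  have hu' : (0:ℝ) < 1 - Real.exp (-s) ^ 2 := by rw [← h2]; exact hu
  rw [st13h, h2]
  field_simp
  ring

lemma st13_hasDerivAt_E (R : ℝ) {s : ℝ} (hs : 0 < s) :
    HasDerivAt (st13E R) (2 * R * st13h s ^ 2 * st13E R s) s := by
  have h1 : HasDerivAt (fun s => -(1/2) * R * st13c s) (-(1/2) * R * -(4 * st13h s ^ 2)) s :=
    (st13_hasDerivAt_c hs).const_mul _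
  have := h1.exp
  refine this.congr_deriv (Eq.symm ?_)
  rw [st13E]; ring

lemma st13_gamma_pos (a : ℝ) (ha : -(1/2) < a) (k : ℕ) : 0 < Real.Gamma ((k:ℝ)+a+1) := by
  apply Real.Gamma_pos_of_pos
  have : (0:ℝ) ≤ (k:ℝ) := Nat.cast_nonneg k
  linarith

lemma st13_hasDerivAt_g (a b R : ℝ) {s : ℝ} (hs : 0 < s) (k : ℕ) :
    HasDerivAt (st13g a b R k) (st13g' a b R k s) s := by
  set p : ℝ := 2*(k:ℝ)+a+1 with hp
  have hne : st13h s ≠ 0 := ne_of_gt (st13h_pos hs)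
  have hpow : HasDerivAt (fun s => st13h s ^ p)
      ((p * st13h s ^ (p-1)) * (-(st13h s * st13c s))) s :=
    (Real.hasDerivAt_rpow_const (Or.inl hne)).comp s (st13_hasDerivAt_h hs)
  have hmul := (hpow.mul (st13_hasDerivAt_E R hs)).const_mul (st13K a b k)
  have key : st13h s ^ (p - 1) * st13h s = st13h s ^ p := by
    rw [← Real.rpow_add_one hne (p-1)]; norm_num
  have hfun : st13g a b R k = fun s => st13K a b k * (st13h s ^ p * st13E R s) := by
    funext t; simp only [st13g]; ring
  rw [hfun]
  refine hmul.congr_deriv (Eq.symm ?_)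
  simp only [st13g']
  linear_combination (st13K a b k * p * st13c s * st13E R s) * key

set_option maxHeartbeats 800000 in
lemma st13_summable (a : ℝ) (ha : -(1/2) < a) {x : ℝ} (hx : 0 ≤ x) :
    Summable (fun k : ℕ =>
      (2*(k:ℝ)+a+2) * x ^ k / ((k.factorial : ℝ) * Real.Gamma ((k:ℝ)+a+1))) := by
  apply summable_of_ratio_norm_eventually_le (r := 1/2) (by norm_num)
  obtain ⟨N, hN⟩ := exists_nat_ge (4*x + |a| + 4)
  filter_upwards [Filter.eventually_ge_atTop N] with k hk
  have hkN : 4*x + |a| + 4 ≤ (k:ℝ) := hN.trans (Nat.cast_le.mpr hk)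
  have ha1 := le_abs_self a
  have ha2 := neg_abs_le a
  have habs : (0:ℝ) ≤ |a| := abs_nonneg a
  have hK0 : (0:ℝ) ≤ (k:ℝ) := Nat.cast_nonneg k
  have hG := st13_gamma_pos a ha k
  have hG' := st13_gamma_pos a ha (k+1)
  have hfac : (0:ℝ) < (k.factorial : ℝ) := by positivity
  have hfac' : (0:ℝ) < ((k+1).factorial : ℝ) := by positivity
  have hxk : (0:ℝ) ≤ x ^ k := pow_nonneg hx k
  have hka : (0:ℝ) < (k:ℝ)+a+1 := by nlinarith
  have hGrec : Real.Gamma (((k+1:ℕ):ℝ)+a+1) = ((k:ℝ)+a+1) * Real.Gamma ((k:ℝ)+a+1) := by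
    push_cast
    rw [show (k:ℝ)+1+a+1 = ((k:ℝ)+a+1)+1 by ring, Real.Gamma_add_one (ne_of_gt hka)]
  have hfacrec : ((k+1).factorial : ℝ) = ((k:ℝ)+1) * (k.factorial : ℝ) := by
    rw [Nat.factorial_succ]; push_cast; ring
  have hnum1 : (0:ℝ) ≤ (2*((k+1:ℕ):ℝ)+a+2) * x ^ (k+1) := by
    apply mul_nonneg _ (pow_nonneg hx _)
    push_cast; nlinarith
  have hnum2 : (0:ℝ) ≤ (2*(k:ℝ)+a+2) * x ^ k := mul_nonneg (by nlinarith) hxk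
  have hpos1 : (0:ℝ) ≤ (2*((k+1:ℕ):ℝ)+a+2) * x ^ (k+1) /
      (((k+1).factorial : ℝ) * Real.Gamma (((k+1:ℕ):ℝ)+a+1)) :=
    div_nonneg hnum1 (mul_pos hfac' hG').le
  have hpos2 : (0:ℝ) ≤ (2*(k:ℝ)+a+2) * x ^ k / ((k.factorial : ℝ) * Real.Gamma ((k:ℝ)+a+1)) :=
    div_nonneg hnum2 (mul_pos hfac hG).le
  have hden1 : (0:ℝ) < ((k+1).factorial : ℝ) * (((k:ℝ)+a+1) * Real.Gamma ((k:ℝ)+a+1)) :=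
    mul_pos hfac' (mul_pos hka hG)
  have hden2 : (0:ℝ) < 2 * ((k.factorial : ℝ) * Real.Gamma ((k:ℝ)+a+1)) := by
    have := mul_pos hfac hG; linarith
  rw [Real.norm_of_nonneg hpos1, Real.norm_of_nonneg hpos2, hGrec,
    show (1:ℝ)/2 * ((2*(k:ℝ)+a+2) * x ^ k / ((k.factorial : ℝ) * Real.Gamma ((k:ℝ)+a+1)))
      = (2*(k:ℝ)+a+2) * x ^ k / (2 * ((k.factorial : ℝ) * Real.Gamma ((k:ℝ)+a+1))) from by ring,
    div_le_div_iff₀ hden1 hden2]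
  push_cast
  rw [hfacrec, pow_succ]
  have hA2 : 4*x+5 ≤ (k:ℝ)+a+1 := by nlinarith
  have hB1 : 1*(4*x+5) ≤ ((k:ℝ)+1)*((k:ℝ)+a+1) :=
    mul_le_mul (by linarith) hA2 (by linarith) (by linarith)
  have key : (2*(k:ℝ)+2+a+2) * x * 2 ≤ (2*(k:ℝ)+a+2) * (((k:ℝ)+1) * ((k:ℝ)+a+1)) := by
    have step1 : (2*(k:ℝ)+2+a+2) * x * 2 ≤ (2*(k:ℝ)+a+2) * (4*x+5) := by
      nlinarith [mul_nonneg hx (show (0:ℝ) ≤ 2*(k:ℝ)+a by nlinarith)]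
    exact step1.trans (mul_le_mul_of_nonneg_left (by linarith) (by nlinarith))
  nlinarith [mul_le_mul_of_nonneg_right key
    (mul_nonneg (mul_nonneg hxk hfac.le) hG.le)]

lemma st13_kernel_eq (a : ℝ) {y z s : ℝ} (hy : 0 < y) (hz : 0 < z) (hs : 0 < s) :
    laguerreHeatKernel a s y z = ∑' k : ℕ, st13g a (y*z) (y^2+z^2) k s := by
  have hh := st13h_pos hs
  have hb : (0:ℝ) < y * z := mul_pos hy hz
  set b := y * z with hbdef
  set R := y^2 + z^2 with hRdef
  have h1 : 2 * Real.exp (-s) / (1 - Real.exp (-2 * s)) = 2 * st13h s := by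
    rw [st13h]; ring
  have h2 : 2 * y * z * Real.exp (-s) / (1 - Real.exp (-2 * s)) = 2 * b * st13h s := by
    rw [st13h]; ring
  have h3 : Real.exp (-(1 / 2) * (y ^ 2 + z ^ 2) * (1 + Real.exp (-2 * s)) /
      (1 - Real.exp (-2 * s))) = st13E R s := by
    rw [st13E, st13c]; congr 1; rw [hRdef]; ring
  have h4 : 2 * b * st13h s / 2 = b * st13h s := by ring
  have hb2 : (b ^ ((1:ℝ)/2)) ^ (2:ℕ) = b := by
    rw [← Real.rpow_natCast (b ^ ((1:ℝ)/2)) 2, ← Real.rpow_mul hb.le]; norm_num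
  have e1 : (2 * st13h s) ^ ((1:ℝ)/2) * (2 * b * st13h s) ^ ((1:ℝ)/2)
      = 2 * st13h s * b ^ ((1:ℝ)/2) := by
    rw [← Real.mul_rpow (by positivity) (by positivity)]
    rw [show 2 * st13h s * (2 * b * st13h s) = (2 * st13h s * b ^ ((1:ℝ)/2)) ^ (2:ℕ) from by
      linear_combination (-4 * st13h s ^ 2) * hb2 + (-4 * st13h s ^ 2) * hbdef]
    rw [← Real.rpow_natCast (2 * st13h s * b ^ ((1:ℝ)/2)) 2, ← Real.rpow_mul (by positivity)]
    norm_num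
  have key : (∑' k : ℕ, st13g a b R k s)
      = (2 * st13h s) ^ ((1:ℝ)/2) * (2 * b * st13h s) ^ ((1:ℝ)/2) * st13E R s *
        ∑' k : ℕ, (b * st13h s) ^ (2*(k:ℝ)+a) / ((k.factorial : ℝ) * Real.Gamma ((k:ℝ)+a+1)) := by
    rw [e1, ← tsum_mul_left]
    apply tsum_congr; intro k
    have e2 : (b * st13h s) ^ (2*(k:ℝ)+a) = b ^ (2*(k:ℝ)+a) * st13h s ^ (2*(k:ℝ)+a) :=
      Real.mul_rpow hb.le hh.le
    have e3 : b ^ (2*(k:ℝ)+a+1/2) = b ^ (2*(k:ℝ)+a) * b ^ ((1:ℝ)/2) := Real.rpow_add hb _ _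
    have e4 : st13h s ^ (2*(k:ℝ)+a+1) = st13h s ^ (2*(k:ℝ)+a) * st13h s :=
      Real.rpow_add_one (ne_of_gt hh) _
    rw [st13g, st13K, e2, e3, e4]
    ring
  rw [laguerreHeatKernel, h1, h2, h3, besselI, h4, key]
  ring

lemma st13c_ge_one {s : ℝ} (hs : 0 < s) : 1 ≤ st13c s := by
  rw [st13c, le_div_iff₀ (st13_u_pos hs)]
  have := Real.exp_pos (-2*s); linarith

lemma st13_decomp {b : ℝ} (hb : 0 < b) (w : ℝ) (k : ℕ) :
    b ^ (2*(k:ℝ)+w) = (b^2)^k * b^w := by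
  rw [show 2*(k:ℝ)+w = ((2*k:ℕ):ℝ) + w by push_cast; ring, Real.rpow_add hb,
    Real.rpow_natCast, pow_mul]

lemma st13_g_abs (a b R : ℝ) (ha : -(1/2) < a) (hb : 0 < b) {s : ℝ} (hs : 0 < s) (k : ℕ) :
    |st13g' a b R k s| =
      (2 * (b^2)^k * b^(a+1/2) / ((k.factorial : ℝ) * Real.Gamma ((k:ℝ)+a+1))) *
        ((st13h s^2)^k * st13h s^(a+1)) * st13E R s *
        |2*R*st13h s^2 - (2*(k:ℝ)+a+1) * st13c s| := by
  have hh := st13h_pos hs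
  have hG := st13_gamma_pos a ha k
  have h1 : (0:ℝ) ≤ st13K a b k * st13h s ^ (2*(k:ℝ)+a+1) * st13E R s := by
    apply mul_nonneg (mul_nonneg _ (Real.rpow_nonneg hh.le _)) (st13E_pos R s).le
    rw [st13K]
    positivity
  rw [st13g', abs_mul, abs_of_nonneg h1, st13K,
    show 2*(k:ℝ)+a+1/2 = 2*(k:ℝ)+(a+1/2) by ring,
    show 2*(k:ℝ)+a+1 = 2*(k:ℝ)+(a+1) by ring,
    st13_decomp hb (a+1/2) k, st13_decomp hh (a+1) k]
  ring

lemma st13_g'_bound (a b R : ℝ) (ha : -(1/2) < a) (hb : 0 < b) (hR : 0 ≤ R)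
    {s H Cc : ℝ} (hs : 0 < s) (hH : st13h s ≤ H) (hc : st13c s ≤ Cc) (k : ℕ) :
    |st13g' a b R k s| ≤
      (2 * b^(a+1/2) * H^(a+1) * st13E R s * (Cc + 2*R*H^2)) *
        ((2*(k:ℝ)+a+2) * ((b*H)^2)^k / ((k.factorial : ℝ) * Real.Gamma ((k:ℝ)+a+1))) := by
  have hh := st13h_pos hs
  have hG := st13_gamma_pos a ha k
  have hcpos := st13c_pos hs
  have hCc : 0 < Cc := lt_of_lt_of_le hcpos hc
  have hHpos : 0 < H := lt_of_lt_of_le hh hH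
  have hk2 : (1:ℝ) ≤ 2*(k:ℝ)+a+2 := by
    have : (0:ℝ) ≤ (k:ℝ) := Nat.cast_nonneg k
    nlinarith
  have hlast : |2*R*st13h s^2 - (2*(k:ℝ)+a+1) * st13c s| ≤
      (2*(k:ℝ)+a+2) * (Cc + 2*R*H^2) := by
    have hp : (0:ℝ) < 2*(k:ℝ)+a+1 := by
      have : (0:ℝ) ≤ (k:ℝ) := Nat.cast_nonneg k
      nlinarith
    have e1 : (2*(k:ℝ)+a+1) * st13c s ≤ (2*(k:ℝ)+a+2) * Cc :=
      mul_le_mul (by linarith) hc hcpos.le (by linarith)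
    have e2 : 2*R*st13h s^2 ≤ (2*(k:ℝ)+a+2) * (2*R*H^2) := by
      have e3 : st13h s^2 ≤ H^2 := by nlinarith
      have e4 : 2*R*st13h s^2 ≤ 2*R*H^2 := by nlinarith
      nlinarith [mul_nonneg hR (sq_nonneg H)]
    rw [abs_le]
    constructor
    · nlinarith [mul_nonneg hR (sq_nonneg (st13h s)), mul_pos hp hcpos]
    · nlinarith [mul_nonneg hR (sq_nonneg (st13h s)), mul_pos hp hcpos]
  have m1 : (st13h s^2)^k * st13h s^(a+1) ≤ (H^2)^k * H^(a+1) :=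
    mul_le_mul (pow_le_pow_left₀ (sq_nonneg _) (by nlinarith) k)
      (Real.rpow_le_rpow hh.le hH (by linarith)) (Real.rpow_nonneg hh.le _) (by positivity)
  have hN1 : (0:ℝ) ≤ 2 * (b^2)^k * b^(a+1/2) / ((k.factorial : ℝ) * Real.Gamma ((k:ℝ)+a+1)) := by
    positivity
  rw [st13_g_abs a b R ha hb hs k,
    show (2 * b^(a+1/2) * H^(a+1) * st13E R s * (Cc + 2*R*H^2)) *
        ((2*(k:ℝ)+a+2) * ((b*H)^2)^k / ((k.factorial : ℝ) * Real.Gamma ((k:ℝ)+a+1)))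
      = (2 * (b^2)^k * b^(a+1/2) / ((k.factorial : ℝ) * Real.Gamma ((k:ℝ)+a+1))) *
        ((H^2)^k * H^(a+1)) * st13E R s * ((2*(k:ℝ)+a+2) * (Cc + 2*R*H^2)) from by
          rw [mul_pow, mul_pow]; ring]
  apply mul_le_mul _ hlast (abs_nonneg _) _
  · exact mul_le_mul_of_nonneg_right (mul_le_mul_of_nonneg_left m1 hN1) (st13E_pos R s).le
  · apply mul_nonneg (mul_nonneg hN1 _) (st13E_pos R s).le
    exact mul_nonneg (pow_nonneg (sq_nonneg _) k) (Real.rpow_nonneg hHpos.le _)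

lemma st13_gval_bound (a b R : ℝ) (ha : -(1/2) < a) (hb : 0 < b) (hR : 0 ≤ R)
    {s H Cc : ℝ} (hs : 0 < s) (hH : st13h s ≤ H) (hCc : 1 ≤ Cc) (hRH : 0 ≤ 2*R*H^2) (k : ℕ) :
    st13g a b R k s ≤
      (2 * b^(a+1/2) * H^(a+1) * (Cc + 2*R*H^2)) *
        ((2*(k:ℝ)+a+2) * ((b*H)^2)^k / ((k.factorial : ℝ) * Real.Gamma ((k:ℝ)+a+1))) := by
  have hh := st13h_pos hs
  have hG := st13_gamma_pos a ha k
  have hHpos : 0 < H := lt_of_lt_of_le hh hH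
  have hk2 : (1:ℝ) ≤ 2*(k:ℝ)+a+2 := by
    have : (0:ℝ) ≤ (k:ℝ) := Nat.cast_nonneg k
    nlinarith
  have step1 : st13g a b R k s ≤
      (2 * (b^2)^k * b^(a+1/2) / ((k.factorial : ℝ) * Real.Gamma ((k:ℝ)+a+1))) *
        ((H^2)^k * H^(a+1)) := by
    rw [st13g, st13K, show 2*(k:ℝ)+a+1/2 = 2*(k:ℝ)+(a+1/2) by ring,
      show 2*(k:ℝ)+a+1 = 2*(k:ℝ)+(a+1) by ring,
      st13_decomp hh (a+1) k, st13_decomp hb (a+1/2) k]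
    have hE1 : st13E R s ≤ 1 := st13E_le_one hR hs
    have hN1 : (0:ℝ) ≤ 2 * ((b^2)^k * b^(a+1/2)) / ((k.factorial : ℝ) * Real.Gamma ((k:ℝ)+a+1)) := by
      positivity
    have m1 : (st13h s^2)^k * st13h s^(a+1) ≤ (H^2)^k * H^(a+1) :=
      mul_le_mul (pow_le_pow_left₀ (sq_nonneg _) (by nlinarith) k)
        (Real.rpow_le_rpow hh.le hH (by linarith)) (Real.rpow_nonneg hh.le _) (by positivity)
    have hAnn : (0:ℝ) ≤ (st13h s^2)^k * st13h s^(a+1) :=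
      mul_nonneg (pow_nonneg (sq_nonneg _) k) (Real.rpow_nonneg hh.le _)
    calc 2 * ((b^2)^k * b^(a+1/2)) / ((k.factorial : ℝ) * Real.Gamma ((k:ℝ)+a+1)) *
          ((st13h s^2)^k * st13h s^(a+1)) * st13E R s
        ≤ 2 * ((b^2)^k * b^(a+1/2)) / ((k.factorial : ℝ) * Real.Gamma ((k:ℝ)+a+1)) *
          ((st13h s^2)^k * st13h s^(a+1)) * 1 :=
          mul_le_mul_of_nonneg_left hE1 (mul_nonneg hN1 hAnn)
      _ ≤ (2 * (b^2)^k * b^(a+1/2) / ((k.factorial : ℝ) * Real.Gamma ((k:ℝ)+a+1))) *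
          ((H^2)^k * H^(a+1)) := by
          rw [mul_one, show 2 * (b^2)^k * b^(a+1/2) / ((k.factorial : ℝ) *
            Real.Gamma ((k:ℝ)+a+1)) = 2 * ((b^2)^k * b^(a+1/2)) / ((k.factorial : ℝ) *
            Real.Gamma ((k:ℝ)+a+1)) from by ring]
          exact mul_le_mul_of_nonneg_left m1 hN1
  refine step1.trans ?_
  rw [show (2 * b^(a+1/2) * H^(a+1) * (Cc + 2*R*H^2)) *
        ((2*(k:ℝ)+a+2) * ((b*H)^2)^k / ((k.factorial : ℝ) * Real.Gamma ((k:ℝ)+a+1)))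
      = ((2 * (b^2)^k * b^(a+1/2) / ((k.factorial : ℝ) * Real.Gamma ((k:ℝ)+a+1))) *
        ((H^2)^k * H^(a+1))) * ((2*(k:ℝ)+a+2) * (Cc + 2*R*H^2)) from by
          rw [mul_pow, mul_pow]; ring]
  nth_rewrite 1 [← mul_one ((2 * (b^2)^k * b^(a+1/2) / ((k.factorial : ℝ) *
    Real.Gamma ((k:ℝ)+a+1))) * ((H^2)^k * H^(a+1)))]
  apply mul_le_mul_of_nonneg_left _ _
  · nlinarith
  · apply mul_nonneg (by positivity)
    exact mul_nonneg (pow_nonneg (sq_nonneg _) k) (Real.rpow_nonneg hHpos.le _)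

lemma st13_final (a R : ℝ) (hR : 0 ≤ R) {s : ℝ} (hs : 0 < s) :
    st13E R s * (st13c s + 2*R*st13h s^2) ≤
      6 * Real.exp (-R/(8*s)) / (1 - Real.exp (-2*s)) := by
  obtain ⟨c, hcdef, hcge, hcle, hhalf⟩ : ∃ c : ℝ, st13c s = c ∧ 1/(2*s) ≤ c ∧
      c ≤ 2 / (1 - Real.exp (-2*s)) ∧ st13h s ≤ c/2 :=
    ⟨st13c s, rfl, st13c_ge hs, st13c_le hs, st13h_le_half_c hs⟩
  obtain ⟨h, hhdef, hhpos⟩ : ∃ h : ℝ, st13h s = h ∧ 0 < h := ⟨st13h s, rfl, st13h_pos hs⟩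
  rw [hhdef] at hhalf
  have hc : 0 < c := by rw [← hcdef]; exact st13c_pos hs
  have hu := st13_u_pos hs
  have hE : st13E R s = Real.exp (-(1/2) * R * c) := by rw [st13E, hcdef]
  rw [hE, hcdef, hhdef]
  have hsplit : Real.exp (-(1/2) * R * c) ≤
      Real.exp (-R/(8*s)) * Real.exp (-((1/4)*R*c)) := by
    rw [← Real.exp_add]
    apply Real.exp_le_exp.mpr
    have h0 : 1/(8*s) = (1/(2*s))/4 := by ring
    have h2 : 0 ≤ R * (c/4 - 1/(8*s)) := mul_nonneg hR (by linarith)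
    have h5 : R * (c/4 - 1/(8*s)) = (1/4)*R*c - R/(8*s) := by ring
    have key : -(1/2) * R * c - (-R/(8*s) + -((1/4)*R*c)) = -((1/4)*R*c - R/(8*s)) := by ring
    linarith [key]
  have key1 : (1/4)*R*c * Real.exp (-((1/4)*R*c)) ≤ 1 := by
    have := Real.add_one_le_exp ((1/4)*R*c)
    have he := Real.exp_pos (-((1/4)*R*c))
    have hid : Real.exp ((1/4)*R*c) * Real.exp (-((1/4)*R*c)) = 1 := by
      rw [← Real.exp_add]; norm_num
    nlinarith
  have he1 : Real.exp (-((1/4)*R*c)) ≤ 1 :=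
    Real.exp_le_one_iff.mpr (by nlinarith [mul_nonneg hR hc.le])
  have claim : Real.exp (-((1/4)*R*c)) * (c + 2*R*h^2) ≤ 3*c := by
    have hcc : 0 < c*c := mul_pos hc hc
    rw [← mul_le_mul_iff_of_pos_right hc]
    have k2 : 2*h^2*((1/4)*R*c*Real.exp (-((1/4)*R*c))) ≤ 2*h^2*1 :=
      mul_le_mul_of_nonneg_left key1 (by positivity)
    have k3 : h^2 ≤ c^2/4 := by nlinarith
    have k4 : Real.exp (-((1/4)*R*c))*(c*c) ≤ c*c := by
      nlinarith [mul_le_mul_of_nonneg_right he1 hcc.le]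
    nlinarith
  have hexp8 : (0:ℝ) ≤ Real.exp (-R/(8*s)) := (Real.exp_pos _).le
  calc Real.exp (-(1/2) * R * c) * (c + 2*R*h^2)
      ≤ (Real.exp (-R/(8*s)) * Real.exp (-((1/4)*R*c))) * (c + 2*R*h^2) := by
        apply mul_le_mul_of_nonneg_right hsplit
        nlinarith [mul_nonneg hR (sq_nonneg h)]
    _ = Real.exp (-R/(8*s)) * (Real.exp (-((1/4)*R*c)) * (c + 2*R*h^2)) := by ring
    _ ≤ Real.exp (-R/(8*s)) * (3*c) := mul_le_mul_of_nonneg_left claim hexp8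
    _ ≤ Real.exp (-R/(8*s)) * (3*(2/(1 - Real.exp (-2*s)))) := by
        apply mul_le_mul_of_nonneg_left _ hexp8
        linarith
    _ = 6 * Real.exp (-R/(8*s)) / (1 - Real.exp (-2*s)) := by ring

lemma st13_h_rpow (a : ℝ) {s : ℝ} (hs : 0 < s) :
    st13h s ^ (a+1) = Real.exp (-(a+1)*s) * (1 - Real.exp (-2*s)) ^ (-(a+1)) := by
  have hu := st13_u_pos hs
  rw [st13h, Real.div_rpow (Real.exp_pos _).le hu.le, Real.rpow_neg hu.le, div_eq_mul_inv,
    ← Real.exp_mul]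
  congr 2
  ring

lemma st13_u_rpow (a : ℝ) {s : ℝ} (hs : 0 < s) :
    (1 - Real.exp (-2*s)) ^ (-(a+1)) * (1 - Real.exp (-2*s))⁻¹
      = (1 - Real.exp (-2*s)) ^ (-(a+2)) := by
  have hu := st13_u_pos hs
  rw [show -(a+2) = -(a+1) + (-1) by ring, Real.rpow_add hu, Real.rpow_neg_one]

lemma st13_hasDerivAt_kernel (a : ℝ) (ha : -(1/2) < a) {y z s : ℝ}
    (hy : 0 < y) (hz : 0 < z) (hs : 0 < s) :
    HasDerivAt (fun s => laguerreHeatKernel a s y z)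
      (∑' k : ℕ, st13g' a (y*z) (y^2+z^2) k s) s := by
  have hb : (0:ℝ) < y*z := mul_pos hy hz
  have hR : (0:ℝ) ≤ y^2+z^2 := by positivity
  have hs2 : 0 < s/2 := by linarith
  have hHpos := st13h_pos hs2
  set b := y*z
  set R := y^2+z^2
  set H := st13h (s/2) with hHdef
  set Cc := st13c (s/2) with hCdef
  set M := 2 * b^(a+1/2) * H^(a+1) * (Cc + 2*R*H^2) with hMdef
  have hCc1 : 1 ≤ Cc := st13c_ge_one hs2
  have hM : 0 ≤ M := by
    have : (0:ℝ) ≤ Cc + 2*R*H^2 := by positivity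
    have h2 : (0:ℝ) ≤ 2 * b^(a+1/2) * H^(a+1) :=
      mul_nonneg (mul_nonneg (by norm_num) (Real.rpow_nonneg hb.le _))
        (Real.rpow_nonneg hHpos.le _)
    exact mul_nonneg h2 this
  have hu : Summable (fun k : ℕ => M *
      ((2*(k:ℝ)+a+2) * ((b*H)^2)^k / ((k.factorial : ℝ) * Real.Gamma ((k:ℝ)+a+1)))) :=
    (st13_summable a ha (sq_nonneg (b*H))).mul_left M
  have hmem : s ∈ Set.Ioo (s/2) (s+1) := ⟨by linarith, by linarith⟩
  have hT : ∀ t ∈ Set.Ioo (s/2) (s+1), 0 < t := fun t ht => lt_trans hs2 ht.1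
  have hderiv : HasDerivAt (fun t => ∑' k : ℕ, st13g a b R k t)
      (∑' k : ℕ, st13g' a b R k s) s := by
    apply hasDerivAt_tsum_of_isPreconnected hu isOpen_Ioo
      (convex_Ioo _ _).isPreconnected
      (fun k t ht => st13_hasDerivAt_g a b R (hT t ht) k)
      (fun k t ht => ?_) hmem ?_ hmem
    · apply Summable.of_nonneg_of_le _
        (fun k => st13_gval_bound a b R ha hb hR hs (st13h_mono hs2 (by linarith))
          hCc1 (by positivity) k) hu
      intro k
      rw [st13g]
      apply mul_nonneg (mul_nonneg _ (Real.rpow_nonneg (st13h_pos hs).le _)) (st13E_pos R s).le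
      rw [st13K]
      have hG := st13_gamma_pos a ha k
      positivity
    · rw [Real.norm_eq_abs]
      have hHt : st13h t ≤ H := st13h_mono hs2 ht.1.le
      have hct : st13c t ≤ Cc := st13c_mono hs2 ht.1.le
      refine (st13_g'_bound a b R ha hb hR (hT t ht) hHt hct k).trans ?_
      apply mul_le_mul_of_nonneg_right _ (by
        have hG := st13_gamma_pos a ha k
        have : (0:ℝ) ≤ 2*(k:ℝ)+a+2 := by
          have : (0:ℝ) ≤ (k:ℝ) := Nat.cast_nonneg k
          nlinarith
        positivity)
      rw [hMdef]
      have hE1 : st13E R t ≤ 1 := st13E_le_one hR (hT t ht)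
      have h2 : (0:ℝ) ≤ 2 * b^(a+1/2) * H^(a+1) :=
        mul_nonneg (mul_nonneg (by norm_num) (Real.rpow_nonneg hb.le _))
          (Real.rpow_nonneg hHpos.le _)
      have h3 : (0:ℝ) ≤ Cc + 2*R*H^2 := by positivity
      calc 2 * b^(a+1/2) * H^(a+1) * st13E R t * (Cc + 2*R*H^2)
          ≤ 2 * b^(a+1/2) * H^(a+1) * 1 * (Cc + 2*R*H^2) := by
            apply mul_le_mul_of_nonneg_right _ h3
            exact mul_le_mul_of_nonneg_left hE1 h2
        _ = 2 * b^(a+1/2) * H^(a+1) * (Cc + 2*R*H^2) := by ring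
  apply hderiv.congr_of_eventuallyEq
  filter_upwards [Ioi_mem_nhds hs] with t ht
  exact st13_kernel_eq a hy hz ht

theorem stmt13 (a : ℝ) (ha : -(1 / 2) < a) :
    ∃ C > 0, ∀ s y z : ℝ, 0 < s → 0 < y → 0 < z →
      y * z * Real.exp (-s) / (1 - Real.exp (-2 * s)) ≤ 1 →
        |deriv (fun s => laguerreHeatKernel a s y z) s| ≤
          C * (y * z) ^ (a + 1 / 2) * Real.exp (-(y ^ 2 + z ^ 2) / (8 * s)) *
            Real.exp (-(a + 1) * s) * (1 - Real.exp (-2 * s)) ^ (-(a + 2)) := by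
  have hSsum : Summable (fun k : ℕ =>
      (2*(k:ℝ)+a+2) * (1:ℝ) ^ k / ((k.factorial : ℝ) * Real.Gamma ((k:ℝ)+a+1))) :=
    st13_summable a ha zero_le_one
  set Ssum := ∑' k : ℕ,
    (2*(k:ℝ)+a+2) * (1:ℝ) ^ k / ((k.factorial : ℝ) * Real.Gamma ((k:ℝ)+a+1)) with hSdef
  have hS0 : 0 ≤ Ssum := by
    apply tsum_nonneg
    intro k
    have hG := st13_gamma_pos a ha k
    have hk : (0:ℝ) ≤ (k:ℝ) := Nat.cast_nonneg k
    apply div_nonneg (mul_nonneg (by nlinarith) (by norm_num)) (by positivity)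
  refine ⟨12*Ssum+1, by linarith, fun s y z hs hy hz hle => ?_⟩
  have hb : (0:ℝ) < y*z := mul_pos hy hz
  have hR : (0:ℝ) ≤ y^2+z^2 := by positivity
  have hh := st13h_pos hs
  have hu := st13_u_pos hs
  have hbh : (y*z) * st13h s ≤ 1 := by
    have e : (y*z) * st13h s = y * z * Real.exp (-s) / (1 - Real.exp (-2*s)) := by
      rw [st13h]; ring
    rw [e]; exact hle
  rw [(st13_hasDerivAt_kernel a ha hy hz hs).deriv]
  set Q := 2*(y*z)^(a+1/2) * st13h s^(a+1) * st13E (y^2+z^2) s *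
    (st13c s + 2*(y^2+z^2)*st13h s^2) with hQ
  have hF0 : (0:ℝ) ≤ 2*(y*z)^(a+1/2) * st13h s^(a+1) :=
    mul_nonneg (mul_nonneg (by norm_num) (Real.rpow_nonneg hb.le _))
      (Real.rpow_nonneg hh.le _)
  have hcR0 : (0:ℝ) ≤ st13c s + 2*(y^2+z^2)*st13h s^2 := by
    have := st13c_pos hs
    nlinarith [mul_nonneg hR (sq_nonneg (st13h s))]
  have hQ0 : 0 ≤ Q := by
    apply mul_nonneg (mul_nonneg hF0 (st13E_pos _ _).le) hcR0
  have step1 : |∑' k : ℕ, st13g' a (y*z) (y^2+z^2) k s| ≤ Q * Ssum := by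
    rw [← Real.norm_eq_abs]
    apply tsum_of_norm_bounded (hSsum.hasSum.mul_left Q)
    intro k
    rw [Real.norm_eq_abs]
    refine (st13_g'_bound a (y*z) (y^2+z^2) ha hb hR hs le_rfl le_rfl k).trans ?_
    rw [← hQ]
    have hbh2 : ((y*z) * st13h s)^2 ≤ 1^k → True := fun _ => trivial
    have hX : (((y*z) * st13h s)^2)^k ≤ (1:ℝ)^k :=
      pow_le_pow_left₀ (sq_nonneg _) (by nlinarith [mul_pos hb hh]) k
    have hG := st13_gamma_pos a ha k
    have hk2 : (0:ℝ) ≤ 2*(k:ℝ)+a+2 := by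
      have : (0:ℝ) ≤ (k:ℝ) := Nat.cast_nonneg k
      nlinarith
    apply mul_le_mul_of_nonneg_left _ hQ0
    apply div_le_div_of_nonneg_right _ (by positivity)
    exact mul_le_mul_of_nonneg_left hX hk2
  refine step1.trans ?_
  have hP0 : (0:ℝ) ≤ (y*z)^(a+1/2) * Real.exp (-(y^2+z^2)/(8*s)) *
      (Real.exp (-(a+1)*s) * (1-Real.exp (-2*s))^(-(a+2))) :=
    mul_nonneg (mul_nonneg (Real.rpow_nonneg hb.le _) (Real.exp_pos _).le)
      (mul_nonneg (Real.exp_pos _).le (Real.rpow_nonneg hu.le _))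
  calc Q * Ssum
      ≤ (2*(y*z)^(a+1/2) * st13h s^(a+1) *
          (6 * Real.exp (-(y^2+z^2)/(8*s)) / (1 - Real.exp (-2*s)))) * Ssum := by
        apply mul_le_mul_of_nonneg_right _ hS0
        rw [hQ, mul_assoc (2*(y*z)^(a+1/2) * st13h s^(a+1))]
        exact mul_le_mul_of_nonneg_left (st13_final a (y^2+z^2) hR hs) hF0
    _ = 12*Ssum * ((y*z)^(a+1/2) * Real.exp (-(y^2+z^2)/(8*s)) *
          (Real.exp (-(a+1)*s) * (1-Real.exp (-2*s))^(-(a+2)))) := by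
        rw [st13_h_rpow a hs, ← st13_u_rpow a hs]
        ring
    _ ≤ (12*Ssum+1) * ((y*z)^(a+1/2) * Real.exp (-(y^2+z^2)/(8*s)) *
          (Real.exp (-(a+1)*s) * (1-Real.exp (-2*s))^(-(a+2)))) :=
        mul_le_mul_of_nonneg_right (by linarith) hP0
    _ = (12*Ssum+1) * (y*z)^(a+1/2) * Real.exp (-(y^2+z^2)/(8*s)) *
          Real.exp (-(a+1)*s) * (1-Real.exp (-2*s))^(-(a+2)) := by ring
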